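/- Let A be a C*-algebra, let X and Y be Banach right A-modules, suppose that X is essential and that {y ∈ Y : y·a = 0 for all a ∈ A} = {0}, and let T : X → Y be a continuous linear map such that for every x ∈ X the value T(x) lies in the norm-closure of the set {Φ(x) : Φ ∈ Hom_A(X,Y)}. Then T ∈ Hom_A(X,Y); in particular, the space Hom_A(X,Y) is a reflexive subspace of B(X,Y). -/

import Mathlib

/-- A contractive Banach right module over a (possibly non-unital) C*-algebra `A`:
the action `(x, a) ↦ x·a` is a continuous bilinear map `X × A → X` satisfying
`(x·a)·b = x·(a*b)` and `‖x·a‖ ≤ ‖x‖·‖a‖`. -/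
structure BanachRightModule (A X : Type*) [NonUnitalCStarAlgebra A]
    [NormedAddCommGroup X] [NormedSpace ℂ X] where
  act : X →L[ℂ] A →L[ℂ] X
  act_mul : ∀ (x : X) (a b : A), act (act x a) b = act x (a * b)
  norm_act_le : ∀ (x : X) (a : A), ‖act x a‖ ≤ ‖x‖ * ‖a‖

section Defs

variable {A X Y : Type*} [NonUnitalCStarAlgebra A]
  [NormedAddCommGroup X] [NormedSpace ℂ X]
  [NormedAddCommGroup Y] [NormedSpace ℂ Y]

/-- A projection in a C*-algebra: a self-adjoint idempotent. -/
def IsProjection {A : Type*} [NonUnitalCStarAlgebra A] (e : A) : Prop :=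
  IsSelfAdjoint e ∧ IsIdempotentElem e

/-- The operator `aTb : x ↦ T(x·a)·b`. -/
noncomputable def sandwich (ρX : BanachRightModule A X) (ρY : BanachRightModule A Y)
    (T : X →L[ℂ] Y) (a b : A) : X →L[ℂ] Y :=
  ((ρY.act.flip b).comp T).comp (ρX.act.flip a)

/-- The set of continuous right `A`-module homomorphisms from `X` to `Y`. -/
def homSet (ρX : BanachRightModule A X) (ρY : BanachRightModule A Y) :
    Set (X →L[ℂ] Y) :=
  {Φ | ∀ (x : X) (a : A), Φ (ρX.act x a) = ρY.act (Φ x) a}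

/-- `β(T) = sup{‖eTf‖ : e, f ∈ A projections with ef = 0}`. -/
noncomputable def betaConst (ρX : BanachRightModule A X) (ρY : BanachRightModule A Y)
    (T : X →L[ℂ] Y) : ℝ :=
  sSup {r : ℝ | ∃ e f : A, IsProjection e ∧ IsProjection f ∧ e * f = 0 ∧
    r = ‖sandwich ρX ρY T e f‖}

/-- `γ(T) = sup{‖aTb‖ : a, b ∈ A positive contractions with ab = 0}`. -/
noncomputable def gammaConst [PartialOrder A] [StarOrderedRing A]
    (ρX : BanachRightModule A X) (ρY : BanachRightModule A Y)
    (T : X →L[ℂ] Y) : ℝ :=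
  sSup {r : ℝ | ∃ a b : A, 0 ≤ a ∧ 0 ≤ b ∧ ‖a‖ ≤ 1 ∧ ‖b‖ ≤ 1 ∧ a * b = 0 ∧
    r = ‖sandwich ρX ρY T a b‖}

/-- `δ(T) = sup_{‖x‖ ≤ 1} inf{‖T(x) − Φ(x)‖ : Φ ∈ Hom_A(X,Y)}`. -/
noncomputable def deltaConst (ρX : BanachRightModule A X) (ρY : BanachRightModule A Y)
    (T : X →L[ℂ] Y) : ℝ :=
  sSup {r : ℝ | ∃ x : X, ‖x‖ ≤ 1 ∧
    r = Metric.infDist (T x) ((fun Φ : X →L[ℂ] Y => Φ x) '' homSet ρX ρY)}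

/-- `‖ad(T)‖ = sup{‖aT − Ta‖ : a ∈ A, ‖a‖ ≤ 1}`, where `(aT)(x) = T(x·a)` and
`(Ta)(x) = T(x)·a`. -/
noncomputable def adNorm (ρX : BanachRightModule A X) (ρY : BanachRightModule A Y)
    (T : X →L[ℂ] Y) : ℝ :=
  sSup {r : ℝ | ∃ a : A, ‖a‖ ≤ 1 ∧
    r = ‖T.comp (ρX.act.flip a) - (ρY.act.flip a).comp T‖}

/-- The module `X` is essential: the linear span of `{x·a : x ∈ X, a ∈ A}` is dense. -/
def Essential (ρX : BanachRightModule A X) : Prop :=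
  Dense (Submodule.span ℂ {z : X | ∃ (x : X) (a : A), z = ρX.act x a} : Set X)

end Defs

namespace Stmt18Aux

variable {A X Y : Type*} [NonUnitalCStarAlgebra A]
  [NormedAddCommGroup X] [NormedSpace ℂ X]
  [NormedAddCommGroup Y] [NormedSpace ℂ Y]

/-- Extended action of the unitization. -/
noncomputable def eact (ρ : BanachRightModule A X) (x : X) (u : Unitization ℂ A) : X :=
  u.fst • x + ρ.act x u.snd

lemma eact_inr (ρ : BanachRightModule A X) (x : X) (a : A) :
    eact ρ x (a : Unitization ℂ A) = ρ.act x a := by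
  simp [eact]

lemma eact_one (ρ : BanachRightModule A X) (x : X) : eact ρ x 1 = x := by
  simp [eact]

lemma eact_zero (ρ : BanachRightModule A X) (x : X) : eact ρ x 0 = 0 := by
  simp [eact]

lemma eact_add_right (ρ : BanachRightModule A X) (x : X) (u v : Unitization ℂ A) :
    eact ρ x (u + v) = eact ρ x u + eact ρ x v := by
  simp only [eact, Unitization.fst_add, Unitization.snd_add, add_smul, map_add]
  abel

lemma eact_smul_right (ρ : BanachRightModule A X) (x : X) (r : ℝ) (u : Unitization ℂ A) :
    eact ρ x (r • u) = r • eact ρ x u := by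
  simp only [eact, Unitization.fst_smul, Unitization.snd_smul, smul_add,
    ContinuousLinearMap.map_smul_of_tower, smul_assoc]

lemma eact_add_left (ρ : BanachRightModule A X) (x y : X) (u : Unitization ℂ A) :
    eact ρ (x + y) u = eact ρ x u + eact ρ y u := by
  simp only [eact, smul_add, map_add, ContinuousLinearMap.add_apply]
  abel

lemma eact_smul_left (ρ : BanachRightModule A X) (x : X) (r : ℝ) (u : Unitization ℂ A) :
    eact ρ (r • x) u = r • eact ρ x u := by
  simp only [eact, smul_add, ContinuousLinearMap.map_smul_of_tower,
    ContinuousLinearMap.smul_apply, smul_comm u.fst r x]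

lemma eact_mul (ρ : BanachRightModule A X) (x : X) (u w : Unitization ℂ A) :
    eact ρ (eact ρ x u) w = eact ρ x (u * w) := by
  simp only [eact, Unitization.fst_mul, Unitization.snd_mul, map_add, map_smul,
    smul_add, smul_smul, ContinuousLinearMap.add_apply,
    ContinuousLinearMap.map_smul_of_tower, ContinuousLinearMap.smul_apply, ρ.act_mul,
    mul_comm u.fst w.fst]
  abel

lemma norm_fst_le (u : Unitization ℂ A) : ‖u.fst‖ ≤ ‖u‖ := by
  have hmem := AlgHom.apply_mem_spectrum (Unitization.fstHom ℂ A) u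
  simpa using spectrum.norm_le_norm_of_mem hmem

lemma norm_snd_le (u : Unitization ℂ A) : ‖u.snd‖ ≤ 2 * ‖u‖ := by
  have hdecomp : ((u.snd : Unitization ℂ A)) = u - Unitization.inl u.fst := by
    rw [eq_sub_iff_add_eq']
    exact Unitization.inl_fst_add_inr_snd_eq u
  have h1 : ‖(u.snd : Unitization ℂ A)‖ ≤ ‖u‖ + ‖(Unitization.inl u.fst : Unitization ℂ A)‖ := by
    rw [hdecomp]; exact norm_sub_le _ _
  have h2 : ‖(Unitization.inl u.fst : Unitization ℂ A)‖ ≤ ‖u.fst‖ := by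
    have : (Unitization.inl u.fst : Unitization ℂ A) = u.fst • 1 := by
      rw [← Unitization.algebraMap_eq_inl, Algebra.algebraMap_eq_smul_one]
    rw [this, norm_smul, norm_one, mul_one]
  have := norm_fst_le u
  rw [Unitization.norm_inr (𝕜 := ℂ) u.snd] at h1
  linarith

lemma norm_eact_le (ρ : BanachRightModule A X) (x : X) (u : Unitization ℂ A) :
    ‖eact ρ x u‖ ≤ 3 * ‖x‖ * ‖u‖ := by
  have h1 : ‖eact ρ x u‖ ≤ ‖u.fst • x‖ + ‖ρ.act x u.snd‖ := norm_add_le _ _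
  have h2 : ‖u.fst • x‖ = ‖u.fst‖ * ‖x‖ := norm_smul _ _
  have h3 : ‖ρ.act x u.snd‖ ≤ ‖x‖ * ‖u.snd‖ := ρ.norm_act_le x u.snd
  have h4 := norm_fst_le u
  have h5 := norm_snd_le u
  have hx : (0:ℝ) ≤ ‖x‖ := norm_nonneg x
  nlinarith [norm_nonneg u]

end Stmt18Aux

namespace Stage2

variable {A X Y : Type*} [NonUnitalCStarAlgebra A]
  [NormedAddCommGroup X] [NormedSpace ℂ X]
  [NormedAddCommGroup Y] [NormedSpace ℂ Y]

open Stmt18Aux in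
lemma hom_eact {ρX : BanachRightModule A X} {ρY : BanachRightModule A Y}
    {Φ : X →L[ℂ] Y} (hΦ : Φ ∈ homSet ρX ρY) (x : X) (u : Unitization ℂ A) :
    Φ (eact ρX x u) = eact ρY (Φ x) u := by
  simp only [eact, map_add, map_smul, hΦ x u.snd]

open Stmt18Aux in
/-- The key vanishing property: zero products annihilate locally approximable maps. -/
lemma keyK {ρX : BanachRightModule A X} {ρY : BanachRightModule A Y}
    {T : X →L[ℂ] Y}
    (h : ∀ x : X, T x ∈ closure ((fun Φ : X →L[ℂ] Y => Φ x) '' homSet ρX ρY))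
    (x : X) (u w : Unitization ℂ A) (huw : u * w = 0) :
    eact ρY (T (eact ρX x u)) w = 0 := by
  have hmem := h (eact ρX x u)
  have hgc : Continuous (fun z : Y => eact ρY z w) := by
    have hrw : (fun z : Y => eact ρY z w)
        = fun z : Y => w.fst • z + (ρY.act.flip w.snd) z := by
      ext z; simp [eact, ContinuousLinearMap.flip_apply]
    rw [hrw]
    exact (continuous_id.const_smul w.fst).add (ρY.act.flip w.snd).continuous
  have himg : eact ρY (T (eact ρX x u)) w ∈
      closure ((fun z : Y => eact ρY z w) ''
        ((fun Φ : X →L[ℂ] Y => Φ (eact ρX x u)) '' homSet ρX ρY)) :=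
    image_closure_subset_closure_image hgc ⟨_, hmem, rfl⟩
  have hsub : ((fun z : Y => eact ρY z w) ''
      ((fun Φ : X →L[ℂ] Y => Φ (eact ρX x u)) '' homSet ρX ρY)) ⊆ {0} := by
    rintro _ ⟨_, ⟨Φ, hΦ, rfl⟩, rfl⟩
    simp only [Set.mem_singleton_iff]
    rw [hom_eact hΦ, eact_mul, huw, eact_zero]
  have hclo : closure ((fun z : Y => eact ρY z w) ''
      ((fun Φ : X →L[ℂ] Y => Φ (eact ρX x u)) '' homSet ρX ρY)) ⊆ {0} :=
    closure_minimal hsub isClosed_singleton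
  exact hclo himg

open Stmt18Aux in
/-- The bilinear map `Θ(u,w) = (T(y·(bu)))·(wc)` on the unitization. -/
noncomputable def theta (ρX : BanachRightModule A X) (ρY : BanachRightModule A Y)
    (T : X →L[ℂ] Y) (y : X) (b c : A) :
    Unitization ℂ A →ₗ[ℝ] Unitization ℂ A →ₗ[ℝ] Y :=
  LinearMap.mk₂ ℝ
    (fun u w => eact ρY (T (eact ρX y ((b : Unitization ℂ A) * u))) (w * (c : Unitization ℂ A)))
    (fun u u' w => by
      beta_reduce
      rw [mul_add, eact_add_right, map_add, eact_add_left])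
    (fun r u w => by
      beta_reduce
      rw [mul_smul_comm, eact_smul_right, ContinuousLinearMap.map_smul_of_tower,
        eact_smul_left])
    (fun u w w' => by
      beta_reduce
      rw [add_mul, eact_add_right])
    (fun r u w => by
      beta_reduce
      rw [smul_mul_assoc, eact_smul_right])

open Stmt18Aux in
lemma theta_vanish {ρX : BanachRightModule A X} {ρY : BanachRightModule A Y}
    {T : X →L[ℂ] Y}
    (h : ∀ x : X, T x ∈ closure ((fun Φ : X →L[ℂ] Y => Φ x) '' homSet ρX ρY))
    (y : X) (b c : A) {u w : Unitization ℂ A} (huw : u * w = 0) :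
    theta ρX ρY T y b c u w = 0 := by
  have hz : ((b : Unitization ℂ A) * u) * (w * (c : Unitization ℂ A)) = 0 := by
    rw [mul_assoc, ← mul_assoc u w, huw, zero_mul, mul_zero]
  simpa [theta, LinearMap.mk₂_apply] using keyK h y _ _ hz

open Stmt18Aux in
lemma norm_theta_le (ρX : BanachRightModule A X) (ρY : BanachRightModule A Y)
    (T : X →L[ℂ] Y) (y : X) (b c : A) (u w : Unitization ℂ A) :
    ‖theta ρX ρY T y b c u w‖ ≤ (9 * ‖T‖ * ‖y‖ * ‖b‖ * ‖c‖) * (‖u‖ * ‖w‖) := by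
  have e0 : theta ρX ρY T y b c u w
      = eact ρY (T (eact ρX y ((b : Unitization ℂ A) * u))) (w * (c : Unitization ℂ A)) := rfl
  rw [e0]
  have h1 : ‖eact ρY (T (eact ρX y ((b : Unitization ℂ A) * u))) (w * (c : Unitization ℂ A))‖
      ≤ 3 * ‖T (eact ρX y ((b : Unitization ℂ A) * u))‖ * ‖w * (c : Unitization ℂ A)‖ :=
    norm_eact_le _ _ _
  have h2 : ‖T (eact ρX y ((b : Unitization ℂ A) * u))‖
      ≤ ‖T‖ * ‖eact ρX y ((b : Unitization ℂ A) * u)‖ := T.le_opNorm _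
  have h3 : ‖eact ρX y ((b : Unitization ℂ A) * u)‖
      ≤ 3 * ‖y‖ * ‖(b : Unitization ℂ A) * u‖ := norm_eact_le _ _ _
  have h4 : ‖(b : Unitization ℂ A) * u‖ ≤ ‖b‖ * ‖u‖ := by
    calc ‖(b : Unitization ℂ A) * u‖ ≤ ‖(b : Unitization ℂ A)‖ * ‖u‖ := norm_mul_le _ _
      _ = ‖b‖ * ‖u‖ := by rw [Unitization.norm_inr]
  have h5 : ‖w * (c : Unitization ℂ A)‖ ≤ ‖w‖ * ‖c‖ := by
    calc ‖w * (c : Unitization ℂ A)‖ ≤ ‖w‖ * ‖(c : Unitization ℂ A)‖ := norm_mul_le _ _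
      _ = ‖w‖ * ‖c‖ := by rw [Unitization.norm_inr]
  have hT : (0:ℝ) ≤ ‖T‖ := norm_nonneg _
  have hy : (0:ℝ) ≤ ‖y‖ := norm_nonneg _
  have hb : (0:ℝ) ≤ ‖b‖ := norm_nonneg _
  have hc : (0:ℝ) ≤ ‖c‖ := norm_nonneg _
  have hu : (0:ℝ) ≤ ‖u‖ := norm_nonneg _
  have hw : (0:ℝ) ≤ ‖w‖ := norm_nonneg _
  have hbu : (0:ℝ) ≤ ‖(b : Unitization ℂ A) * u‖ := norm_nonneg _
  have hwc : (0:ℝ) ≤ ‖w * (c : Unitization ℂ A)‖ := norm_nonneg _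
  have hTn : ‖T (eact ρX y ((b : Unitization ℂ A) * u))‖ ≤ ‖T‖ * (3 * ‖y‖ * (‖b‖ * ‖u‖)) := by
    calc ‖T (eact ρX y ((b : Unitization ℂ A) * u))‖
        ≤ ‖T‖ * ‖eact ρX y ((b : Unitization ℂ A) * u)‖ := h2
      _ ≤ ‖T‖ * (3 * ‖y‖ * (‖b‖ * ‖u‖)) := by
          apply mul_le_mul_of_nonneg_left _ hT
          calc ‖eact ρX y ((b : Unitization ℂ A) * u)‖
              ≤ 3 * ‖y‖ * ‖(b : Unitization ℂ A) * u‖ := h3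
            _ ≤ 3 * ‖y‖ * (‖b‖ * ‖u‖) := by
                apply mul_le_mul_of_nonneg_left h4 (by positivity)
  calc ‖eact ρY (T (eact ρX y ((b : Unitization ℂ A) * u))) (w * (c : Unitization ℂ A))‖
      ≤ 3 * ‖T (eact ρX y ((b : Unitization ℂ A) * u))‖ * ‖w * (c : Unitization ℂ A)‖ := h1
    _ ≤ 3 * (‖T‖ * (3 * ‖y‖ * (‖b‖ * ‖u‖))) * (‖w‖ * ‖c‖) := by
        apply mul_le_mul _ h5 hwc (by positivity)
        apply mul_le_mul_of_nonneg_left hTn (by norm_num)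
    _ = (9 * ‖T‖ * ‖y‖ * ‖b‖ * ‖c‖) * (‖u‖ * ‖w‖) := by ring

end Stage2

namespace Stmt18Aux

/-- triangular bump -/
noncomputable def tri (v : ℝ) : ℝ := max (1 - |v|) 0

lemma tri_nonneg (v : ℝ) : 0 ≤ tri v := le_max_right _ _

lemma tri_eq_zero {v : ℝ} (h : 1 ≤ |v|) : tri v = 0 :=
  max_eq_right (by linarith)

lemma tri_of_abs_le {v : ℝ} (h : |v| ≤ 1) : tri v = 1 - |v| :=
  max_eq_left (by linarith)

lemma continuous_tri : Continuous tri :=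
  (continuous_const.sub continuous_abs).max continuous_const

lemma tri_orth {k l : ℕ} (hkl : k + 2 ≤ l) (s : ℝ) : tri (s - k) * tri (s - l) = 0 := by
  have hkl' : (k : ℝ) + 2 ≤ l := by exact_mod_cast hkl
  rcases le_or_gt s (k + 1) with hs | hs
  · have h0 : tri (s - l) = 0 := by
      apply tri_eq_zero
      rw [abs_of_nonpos (by linarith)]
      linarith
    rw [h0, mul_zero]
  · have h0 : tri (s - k) = 0 := by
      apply tri_eq_zero
      rw [abs_of_nonneg (by linarith)]
      linarith
    rw [h0, zero_mul]

lemma grid_sum (n : ℕ) (hn : 1 ≤ n) (s : ℝ) (h0 : 0 ≤ s) (h1 : s ≤ n) (w : ℕ → ℝ) :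
    ∃ j : ℕ, j + 1 ≤ n ∧ (j : ℝ) ≤ s ∧ s ≤ (j : ℝ) + 1 ∧
      ∑ k ∈ Finset.range (n + 1), w k * tri (s - k)
        = w j * (1 - (s - j)) + w (j + 1) * (s - j) := by
  set j : ℕ := min (n - 1) ⌊s⌋₊ with hj
  have hjn : j + 1 ≤ n := by
    have h := min_le_left (n - 1) ⌊s⌋₊
    omega
  have hjs : (j : ℝ) ≤ s := by
    have h : j ≤ ⌊s⌋₊ := min_le_right _ _
    calc (j : ℝ) ≤ (⌊s⌋₊ : ℝ) := by exact_mod_cast h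
      _ ≤ s := Nat.floor_le h0
  have hsj : s ≤ (j : ℝ) + 1 := by
    rcases le_or_gt ⌊s⌋₊ (n - 1) with hc | hc
    · have hjj : j = ⌊s⌋₊ := min_eq_right hc
      rw [hjj]
      exact (Nat.lt_floor_add_one s).le
    · have hjj : j = n - 1 := min_eq_left hc.le
      have hcast : ((n - 1 : ℕ) : ℝ) + 1 = (n : ℝ) := by
        have : (1:ℕ) ≤ n := hn
        push_cast [Nat.cast_sub this]
        ring
      rw [hjj, hcast]
      exact h1
  refine ⟨j, hjn, hjs, hsj, ?_⟩
  have hsub : ({j, j + 1} : Finset ℕ) ⊆ Finset.range (n + 1) := by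
    intro k hk
    simp only [Finset.mem_insert, Finset.mem_singleton] at hk
    simp only [Finset.mem_range]
    omega
  have hzero : ∀ k ∈ Finset.range (n + 1), k ∉ ({j, j + 1} : Finset ℕ) →
      w k * tri (s - k) = 0 := by
    intro k _ hknot
    simp only [Finset.mem_insert, Finset.mem_singleton] at hknot
    push_neg at hknot
    have htri : tri (s - k) = 0 := by
      apply tri_eq_zero
      rcases Nat.lt_or_ge k j with hlt | hge
      · have : (k : ℝ) + 1 ≤ j := by exact_mod_cast hlt
        rw [abs_of_nonneg (by linarith)]
        linarith
      · have : j + 2 ≤ k := by omega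
        have hc : (j : ℝ) + 2 ≤ k := by exact_mod_cast this
        rw [abs_of_nonpos (by linarith)]
        linarith
    rw [htri, mul_zero]
  rw [← Finset.sum_subset hsub hzero]
  rw [Finset.sum_insert (by simp), Finset.sum_singleton]
  have e1 : tri (s - j) = 1 - (s - j) := by
    rw [tri_of_abs_le (by rw [abs_of_nonneg (by linarith)]; linarith),
      abs_of_nonneg (by linarith)]
  have e2 : tri (s - (j + 1 : ℕ)) = s - j := by
    have hc : s - ((j : ℕ) + 1 : ℕ) = (s - j) - 1 := by push_cast; ring
    rw [hc, tri_of_abs_le (by rw [abs_of_nonpos (by linarith)]; linarith),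
      abs_of_nonpos (by linarith)]
    ring
  rw [e1, e2]


end Stmt18Aux

namespace Stage3

open Stmt18Aux Stage2

variable {A X Y : Type*} [NonUnitalCStarAlgebra A]
  [NormedAddCommGroup X] [NormedSpace ℂ X]
  [NormedAddCommGroup Y] [NormedSpace ℂ Y]

lemma gridsum_one (n : ℕ) (hn : 1 ≤ n) (s : ℝ) (h0 : 0 ≤ s) (h1 : s ≤ n) :
    ∑ k ∈ Finset.range (n + 1), tri (s - k) = 1 := by
  obtain ⟨j, _, hjs, hsj, hsum⟩ := grid_sum n hn s h0 h1 (fun _ => 1)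
  simp only [one_mul] at hsum
  rw [hsum]; ring

lemma gridsum_id (n : ℕ) (hn : 1 ≤ n) (R : ℝ) (hR : 0 < R) (t : ℝ)
    (h0 : 0 ≤ n / (2 * R) * (t + R)) (h1 : n / (2 * R) * (t + R) ≤ n) :
    ∑ k ∈ Finset.range (n + 1), (-R + 2 * R / n * k) * tri (n / (2 * R) * (t + R) - k) = t := by
  obtain ⟨j, _, hjs, hsj, hsum⟩ :=
    grid_sum n hn _ h0 h1 (fun k => -R + 2 * R / n * k)
  rw [hsum]
  have hn0 : (0:ℝ) < n := by exact_mod_cast hn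
  have hR0 : R ≠ 0 := ne_of_gt hR
  push_cast
  field_simp
  ring

lemma coefA (k : ℕ) : (-1 : ℝ) ^ ((k + 1) / 2) * (-1 : ℝ) ^ ((k + 1) / 2) = 1 := by
  rw [← pow_add]
  exact Even.neg_one_pow ⟨(k + 1) / 2, rfl⟩

lemma coefB (k : ℕ) : (-1 : ℝ) ^ (k / 2) * (-1 : ℝ) ^ ((k + 2) / 2) = -1 := by
  have h2 : (k + 2) / 2 = k / 2 + 1 := by omega
  rw [h2, pow_succ, ← mul_assoc, ← pow_add, Even.neg_one_pow ⟨k / 2, rfl⟩]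
  ring

lemma mainSA {ρX : BanachRightModule A X} {ρY : BanachRightModule A Y}
    {T : X →L[ℂ] Y}
    (h : ∀ x : X, T x ∈ closure ((fun Φ : X →L[ℂ] Y => Φ x) '' homSet ρX ρY))
    (y : X) (b c : A) (a : A) (ha : IsSelfAdjoint a) :
    ρY.act (T (ρX.act y (b * a))) c = ρY.act (T (ρX.act y b)) (a * c) := by
  set aU : Unitization ℂ A := (a : Unitization ℂ A) with hadef
  have hsa : IsSelfAdjoint aU := ha.inr ℂ
  set Θ := theta ρX ρY T y b c with hTdef
  have hTab : Θ aU 1 = ρY.act (T (ρX.act y (b * a))) c := by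
    have e : Θ aU 1 = eact ρY (T (eact ρX y ((b : Unitization ℂ A) * aU)))
        (1 * (c : Unitization ℂ A)) := rfl
    rw [e, one_mul, hadef, ← Unitization.inr_mul, eact_inr, eact_inr]
  have hTba : Θ 1 aU = ρY.act (T (ρX.act y b)) (a * c) := by
    have e : Θ 1 aU = eact ρY (T (eact ρX y ((b : Unitization ℂ A) * 1)))
        (aU * (c : Unitization ℂ A)) := rfl
    rw [e, mul_one, hadef, ← Unitization.inr_mul, eact_inr, eact_inr]
  rw [← hTab, ← hTba, ← sub_eq_zero]
  set M : ℝ := 9 * ‖T‖ * ‖y‖ * ‖b‖ * ‖c‖ with hMdef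
  have hM : 0 ≤ M := by rw [hMdef]; positivity
  set R : ℝ := ‖aU‖ + 1 with hRdef
  have hR : 0 < R := by rw [hRdef]; positivity
  -- the crucial bound for every n ≥ 1
  have key : ∀ n : ℕ, 1 ≤ n → ‖Θ aU 1 - Θ 1 aU‖ ≤ 2 * M * R / n := by
    intro n hn
    have hn0 : (0:ℝ) < n := by exact_mod_cast hn
    set q : ℝ := n / (2 * R) with hqdef
    have hq : 0 < q := by rw [hqdef]; positivity
    set hf : ℕ → ℝ → ℝ := fun k t => tri (q * (t + R) - k) with hfdef
    have hfc : ∀ k, Continuous (hf k) := by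
      intro k
      apply continuous_tri.comp
      fun_prop
    have hfcOn : ∀ k, ContinuousOn (hf k) (spectrum ℝ aU) := fun k => (hfc k).continuousOn
    set u : ℕ → Unitization ℂ A := fun k => cfc (hf k) aU with hudef
    set tk : ℕ → ℝ := fun k => -R + 2 * R / n * k with htkdef
    set sg : ℕ → ℝ := fun k => (-1 : ℝ) ^ ((k + 1) / 2) with hsgdef
    set tu : ℕ → ℝ := fun k => (-1 : ℝ) ^ (k / 2) with htudef
    have hs01 : ∀ t ∈ spectrum ℝ aU, 0 ≤ q * (t + R) ∧ q * (t + R) ≤ n := by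
      intro t ht
      have h1 : ‖t‖ ≤ ‖aU‖ := spectrum.norm_le_norm_of_mem ht
      rw [Real.norm_eq_abs] at h1
      have hl : -R ≤ t := by
        have := neg_abs_le t; rw [hRdef]; linarith
      have hr : t ≤ R := by
        have := le_abs_self t; rw [hRdef]; linarith
      constructor
      · apply mul_nonneg hq.le; linarith
      · have h2 : q * (t + R) ≤ q * (2 * R) := by
          apply mul_le_mul_of_nonneg_left _ hq.le; linarith
        have h3 : q * (2 * R) = n := by
          rw [hqdef]; field_simp
        linarith
    -- combination lemma
    have hcfc_comb : ∀ w : ℕ → ℝ,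
        cfc (fun t => ∑ k ∈ Finset.range (n + 1), w k * hf k t) aU
          = ∑ k ∈ Finset.range (n + 1), w k • u k := by
      intro w
      have h1 : (fun t => ∑ k ∈ Finset.range (n + 1), w k * hf k t)
          = (∑ k ∈ Finset.range (n + 1), fun t => w k • hf k t) := by
        funext t
        rw [Finset.sum_apply]
        simp [smul_eq_mul]
      rw [h1, cfc_sum (fun k t => w k • hf k t) aU (Finset.range (n + 1)) (fun i _ => ((hfc i).const_smul (w i)).continuousOn)]
      exact Finset.sum_congr rfl fun k _ => cfc_smul (w k) (hf k) aU (hfcOn k)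
    have hA : (∑ k ∈ Finset.range (n + 1), tk k • u k) = aU := by
      rw [← hcfc_comb tk]
      have e : cfc (fun t => ∑ k ∈ Finset.range (n + 1), tk k * hf k t) aU
          = cfc (id : ℝ → ℝ) aU := by
        apply cfc_congr
        intro t ht
        obtain ⟨h0, h1⟩ := hs01 t ht
        simp only [hfdef, htkdef, hqdef, id_eq]
        rw [hqdef] at h0 h1
        exact gridsum_id n hn R hR t h0 h1
      rw [e, cfc_id ℝ aU hsa]
    have hOne : (∑ k ∈ Finset.range (n + 1), (1:ℝ) • u k) = 1 := by
      have e0 : (∑ k ∈ Finset.range (n + 1), (1:ℝ) • u k)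
          = ∑ k ∈ Finset.range (n + 1), (fun _ : ℕ => (1:ℝ)) k • u k := rfl
      rw [e0, ← hcfc_comb (fun _ => 1)]
      have e : cfc (fun t => ∑ k ∈ Finset.range (n + 1), (fun _ : ℕ => (1:ℝ)) k * hf k t) aU
          = cfc (fun _ : ℝ => (1:ℝ)) aU := by
        apply cfc_congr
        intro t ht
        obtain ⟨h0, h1⟩ := hs01 t ht
        simp only [one_mul, hfdef]
        rw [hqdef] at h0 h1 ⊢
        exact gridsum_one n hn _ h0 h1
      rw [e, cfc_const_one ℝ aU hsa]
    have horth : ∀ k l : ℕ, k + 2 ≤ l ∨ l + 2 ≤ k → u k * u l = 0 := by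
      intro k l hkl
      have e1 : u k * u l = cfc (fun t => hf k t * hf l t) aU := by
        simp only [hudef]
        exact (cfc_mul (hf k) (hf l) aU (hfcOn k) (hfcOn l)).symm
      have e2 : (fun t => hf k t * hf l t) = (fun _ : ℝ => (0:ℝ)) := by
        funext t
        simp only [hfdef]
        rcases hkl with h2 | h2
        · exact tri_orth h2 _
        · rw [mul_comm]; exact tri_orth h2 _
      rw [e1, e2]
      exact cfc_const_zero ℝ aU
    have hnormcomb : ∀ w : ℕ → ℝ, (∀ k, |w k| = 1) →
        ‖∑ k ∈ Finset.range (n + 1), w k • u k‖ ≤ 1 := by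
      intro w hw
      rw [← hcfc_comb w]
      apply norm_cfc_le zero_le_one
      intro t ht
      rw [Real.norm_eq_abs]
      calc |∑ k ∈ Finset.range (n + 1), w k * hf k t|
          ≤ ∑ k ∈ Finset.range (n + 1), |w k * hf k t| := Finset.abs_sum_le_sum_abs _ _
        _ = ∑ k ∈ Finset.range (n + 1), hf k t := by
            refine Finset.sum_congr rfl fun k _ => ?_
            rw [abs_mul, hw k, one_mul]
            simp only [hfdef]
            exact abs_of_nonneg (tri_nonneg _)
        _ = 1 := by
            obtain ⟨h0, h1⟩ := hs01 t ht
            simp only [hfdef]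
            exact gridsum_one n hn _ h0 h1
    -- expansion of Θ on双 sums
    have hexp : ∀ v w : ℕ → ℝ,
        Θ (∑ k ∈ Finset.range (n + 1), v k • u k) (∑ l ∈ Finset.range (n + 1), w l • u l)
          = ∑ k ∈ Finset.range (n + 1), ∑ l ∈ Finset.range (n + 1),
              (v k * w l) • Θ (u k) (u l) := by
      intro v w
      have e1 : Θ (∑ k ∈ Finset.range (n + 1), v k • u k)
          = ∑ k ∈ Finset.range (n + 1), Θ (v k • u k) := map_sum Θ _ _
      rw [e1, LinearMap.sum_apply]
      refine Finset.sum_congr rfl fun k _ => ?_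
      have e2 : Θ (v k • u k) = v k • Θ (u k) := map_smul Θ _ _
      rw [e2, LinearMap.smul_apply, map_sum, Finset.smul_sum]
      refine Finset.sum_congr rfl fun l _ => ?_
      rw [map_smul, smul_smul]
    have hDelta : Θ aU 1 - Θ 1 aU
        = ∑ k ∈ Finset.range (n + 1), ∑ l ∈ Finset.range (n + 1),
            (tk k - tk l) • Θ (u k) (u l) := by
      conv_lhs => rw [← hA, ← hOne]
      rw [show (∑ k ∈ Finset.range (n + 1), (1:ℝ) • u k)
            = ∑ k ∈ Finset.range (n + 1), (fun _ : ℕ => (1:ℝ)) k • u k from rfl]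
      rw [hexp tk (fun _ => 1), hexp (fun _ => 1) tk, ← Finset.sum_sub_distrib]
      refine Finset.sum_congr rfl fun k _ => ?_
      rw [← Finset.sum_sub_distrib]
      refine Finset.sum_congr rfl fun l _ => ?_
      rw [mul_one, one_mul, ← sub_smul]
    have hpair : ∀ k ∈ Finset.range (n + 1), ∀ l ∈ Finset.range (n + 1),
        (tk k - tk l) • Θ (u k) (u l)
          = (-(R / n)) • ((sg k * tu l - tu k * sg l) • Θ (u k) (u l)) := by
      intro k _ l _
      rcases Nat.lt_trichotomy k l with hkl | rfl | hlk
      · rcases Nat.lt_or_ge l (k + 2) with h2 | h2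
        · have hl : l = k + 1 := by omega
          subst hl
          have e1 : tk k - tk (k + 1) = -(2 * R / n) := by
            simp only [htkdef]; push_cast; ring
          have e2 : sg k * tu (k + 1) - tu k * sg (k + 1) = 2 := by
            simp only [hsgdef, htudef]
            rw [show k + 1 + 1 = k + 2 from rfl, coefA k, coefB k]
            norm_num
          rw [e1, e2, smul_smul]
          congr 1
          ring
        · have h0 : Θ (u k) (u l) = 0 := theta_vanish h y b c (horth k l (Or.inl h2))
          rw [h0, smul_zero, smul_zero, smul_zero]
      · rw [sub_self, zero_smul, show sg k * tu k - tu k * sg k = 0 from by ring,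
          zero_smul, smul_zero]
      · rcases Nat.lt_or_ge k (l + 2) with h2 | h2
        · have hk : k = l + 1 := by omega
          subst hk
          have e1 : tk (l + 1) - tk l = 2 * R / n := by
            simp only [htkdef]; push_cast; ring
          have e2 : sg (l + 1) * tu l - tu (l + 1) * sg l = -2 := by
            simp only [hsgdef, htudef]
            have p1 : (-1 : ℝ) ^ ((l + 1 + 1) / 2) * (-1 : ℝ) ^ (l / 2) = -1 := by
              rw [mul_comm, show l + 1 + 1 = l + 2 from rfl]
              exact coefB l
            have p2 : (-1 : ℝ) ^ ((l + 1) / 2) * (-1 : ℝ) ^ ((l + 1) / 2) = 1 := coefA l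
            rw [p1, p2]
            norm_num
          rw [e1, e2, smul_smul]
          congr 1
          ring
        · have h0 : Θ (u k) (u l) = 0 := theta_vanish h y b c (horth k l (Or.inr h2))
          rw [h0, smul_zero, smul_zero, smul_zero]
    have hfinal : Θ aU 1 - Θ 1 aU
        = (-(R / n)) • (Θ (∑ k ∈ Finset.range (n + 1), sg k • u k)
              (∑ l ∈ Finset.range (n + 1), tu l • u l)
            + Θ (∑ k ∈ Finset.range (n + 1), tu k • u k)
              (∑ l ∈ Finset.range (n + 1), (fun l => -sg l) l • u l)) := by
      rw [hDelta, Finset.sum_congr rfl (fun k hk =>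
        Finset.sum_congr rfl (fun l hl => hpair k hk l hl))]
      rw [hexp sg tu, hexp tu (fun l => -sg l), ← Finset.sum_add_distrib]
      rw [Finset.smul_sum]
      refine Finset.sum_congr rfl fun k _ => ?_
      rw [← Finset.sum_add_distrib, Finset.smul_sum]
      refine Finset.sum_congr rfl fun l _ => ?_
      rw [← add_smul]
      congr 2
      ring
    rw [hfinal, norm_smul]
    have h1 : ‖(-(R / n) : ℝ)‖ = R / n := by
      rw [Real.norm_eq_abs, abs_neg, abs_of_nonneg (by positivity)]
    have hnsg : ∀ k, |sg k| = 1 := fun k => by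
      simp only [hsgdef]; rw [abs_pow, abs_neg, abs_one, one_pow]
    have hntu : ∀ k, |tu k| = 1 := fun k => by
      simp only [htudef]; rw [abs_pow, abs_neg, abs_one, one_pow]
    have hn1 := hnormcomb sg hnsg
    have hn2 := hnormcomb tu hntu
    have hn3 := hnormcomb (fun l => -sg l) (fun k => by rw [abs_neg]; exact hnsg k)
    have hb1 := norm_theta_le ρX ρY T y b c (∑ k ∈ Finset.range (n + 1), sg k • u k)
      (∑ l ∈ Finset.range (n + 1), tu l • u l)
    have hb2 := norm_theta_le ρX ρY T y b c (∑ k ∈ Finset.range (n + 1), tu k • u k)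
      (∑ l ∈ Finset.range (n + 1), (fun l => -sg l) l • u l)
    have hM1 : ‖Θ (∑ k ∈ Finset.range (n + 1), sg k • u k)
        (∑ l ∈ Finset.range (n + 1), tu l • u l)‖ ≤ M := by
      refine le_trans hb1 (le_trans (mul_le_of_le_one_right (by positivity)
        (mul_le_one₀ hn1 (norm_nonneg _) hn2)) ?_)
      rw [hMdef]
    have hM2 : ‖Θ (∑ k ∈ Finset.range (n + 1), tu k • u k)
        (∑ l ∈ Finset.range (n + 1), (fun l => -sg l) l • u l)‖ ≤ M := by
      refine le_trans hb2 (le_trans (mul_le_of_le_one_right (by positivity)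
        (mul_le_one₀ hn2 (norm_nonneg _) hn3)) ?_)
      rw [hMdef]
    have hsum2 : ‖Θ (∑ k ∈ Finset.range (n + 1), sg k • u k)
          (∑ l ∈ Finset.range (n + 1), tu l • u l)
        + Θ (∑ k ∈ Finset.range (n + 1), tu k • u k)
          (∑ l ∈ Finset.range (n + 1), (fun l => -sg l) l • u l)‖ ≤ 2 * M :=
      le_trans (norm_add_le _ _) (by linarith)
    rw [h1]
    refine le_trans (mul_le_mul_of_nonneg_left hsum2
      (show (0:ℝ) ≤ R / n by positivity)) (le_of_eq (by ring))
  -- conclude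
  rw [← norm_le_zero_iff]
  by_contra hpos
  push_neg at hpos
  obtain ⟨n, hn⟩ := exists_nat_gt (max 1 (2 * M * R / ‖Θ aU 1 - Θ 1 aU‖))
  have hn1 : 1 ≤ n := by
    have h1 : (1:ℝ) < n := lt_of_le_of_lt (le_max_left _ _) hn
    exact_mod_cast h1.le
  have hn0 : (0:ℝ) < n := by exact_mod_cast hn1
  have h2 : 2 * M * R / ‖Θ aU 1 - Θ 1 aU‖ < n := lt_of_le_of_lt (le_max_right _ _) hn
  have h3 : 2 * M * R / n < ‖Θ aU 1 - Θ 1 aU‖ := by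
    rw [div_lt_iff₀ hn0]
    rw [div_lt_iff₀ hpos] at h2
    rw [mul_comm ((n:ℝ)) _] at h2
    exact h2
  exact absurd (key n hn1) (not_le.mpr h3)

end Stage3

namespace Stage4

open Stmt18Aux Stage2 Stage3

variable {A X Y : Type*} [NonUnitalCStarAlgebra A]
  [NormedAddCommGroup X] [NormedSpace ℂ X]
  [NormedAddCommGroup Y] [NormedSpace ℂ Y]

lemma mainId {ρX : BanachRightModule A X} {ρY : BanachRightModule A Y}
    {T : X →L[ℂ] Y}
    (h : ∀ x : X, T x ∈ closure ((fun Φ : X →L[ℂ] Y => Φ x) '' homSet ρX ρY))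
    (y : X) (b c a : A) :
    ρY.act (T (ρX.act y (b * a))) c = ρY.act (T (ρX.act y b)) (a * c) := by
  set a1 : A := (2⁻¹ : ℂ) • (a + star a) with ha1
  set a2 : A := (Complex.I / 2) • (star a - a) with ha2
  have hsa1 : IsSelfAdjoint a1 := by
    rw [ha1]
    simp only [IsSelfAdjoint, star_smul, star_add, star_star, Complex.star_def, map_inv₀,
      map_ofNat]
    rw [add_comm]
  have hsa2 : IsSelfAdjoint a2 := by
    rw [ha2]
    simp only [IsSelfAdjoint, star_smul, star_sub, star_star, Complex.star_def, map_div₀,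
      Complex.conj_I, map_ofNat, neg_div, neg_smul, smul_sub]
    module
  have hdecomp : a = a1 + Complex.I • a2 := by
    rw [ha1, ha2, smul_smul]
    have hII : Complex.I * (Complex.I / 2) = -(2⁻¹ : ℂ) := by
      rw [mul_div_assoc', Complex.I_mul_I]
      norm_num
    rw [hII]
    module
  have h1 := mainSA h y b c a1 hsa1
  have h2 := mainSA h y b c a2 hsa2
  have e1 : b * (a1 + Complex.I • a2) = b * a1 + Complex.I • (b * a2) := by
    rw [mul_add, mul_smul_comm Complex.I b a2]
  have e2 : (a1 + Complex.I • a2) * c = a1 * c + Complex.I • (a2 * c) := by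
    rw [add_mul, smul_mul_assoc Complex.I a2 c]
  rw [hdecomp, e1, e2]
  simp only [map_add, map_smul, ContinuousLinearMap.add_apply,
    ContinuousLinearMap.coe_smul', Pi.smul_apply]
  rw [h1, h2]

end Stage4


/-- Let `A` be a C*-algebra, `X` and `Y` Banach right `A`-modules
with `X` essential and `{y ∈ Y : y·A = 0} = {0}`, and let `T : X → Y` be a
continuous linear map such that `T(x)` lies in the norm-closure of
`{Φ(x) : Φ ∈ Hom_A(X,Y)}` for every `x`.  Then `T ∈ Hom_A(X,Y)`; in particular,
`Hom_A(X,Y)` is a reflexive subspace of `B(X,Y)`. -/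
theorem stmt18 {A X Y : Type*} [NonUnitalCStarAlgebra A]
    [NormedAddCommGroup X] [NormedSpace ℂ X] [CompleteSpace X]
    [NormedAddCommGroup Y] [NormedSpace ℂ Y] [CompleteSpace Y]
    (ρX : BanachRightModule A X) (ρY : BanachRightModule A Y)
    (hX : Essential ρX)
    (hY : ∀ y : Y, (∀ a : A, ρY.act y a = 0) → y = 0)
    (T : X →L[ℂ] Y)
    (h : ∀ x : X, T x ∈ closure ((fun Φ : X →L[ℂ] Y => Φ x) '' homSet ρX ρY)) :
    T ∈ homSet ρX ρY := by
  have hX : Dense (Submodule.span ℂ {z : X | ∃ (x : X) (a : A), z = ρX.act x a} : Set X) := hX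

  intro x a
  have hId : ∀ (z : X) (c : A), ρY.act (T (ρX.act z a)) c = ρY.act (T z) (a * c) := by
    intro z c
    set L : X →L[ℂ] Y :=
      (ρY.act.flip c).comp (T.comp (ρX.act.flip a)) - (ρY.act.flip (a * c)).comp T with hL
    have hLapp : ∀ w : X, L w
        = ρY.act (T (ρX.act w a)) c - ρY.act (T w) (a * c) := by
      intro w
      simp only [hL, ContinuousLinearMap.sub_apply, ContinuousLinearMap.comp_apply,
        ContinuousLinearMap.flip_apply]
    have hker : Submodule.span ℂ {z : X | ∃ (x : X) (a : A), z = ρX.act x a}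
        ≤ LinearMap.ker (L : X →ₗ[ℂ] Y) := by
      rw [Submodule.span_le]
      rintro w ⟨y, b, rfl⟩
      simp only [SetLike.mem_coe, LinearMap.mem_ker, ContinuousLinearMap.coe_coe]
      rw [hLapp, sub_eq_zero, ρX.act_mul]
      exact Stage4.mainId h y b c a
    have hclosed : IsClosed ((LinearMap.ker (L : X →ₗ[ℂ] Y) : Submodule ℂ X) : Set X) :=
      ContinuousLinearMap.isClosed_ker L
    have hLz : L z = 0 := by
      have hzc : z ∈ closure (Submodule.span ℂ
          {z : X | ∃ (x : X) (a : A), z = ρX.act x a} : Set X) := hX z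
      have hsub : closure (Submodule.span ℂ
          {z : X | ∃ (x : X) (a : A), z = ρX.act x a} : Set X)
          ⊆ ((LinearMap.ker (L : X →ₗ[ℂ] Y) : Submodule ℂ X) : Set X) :=
        closure_minimal hker hclosed
      exact LinearMap.mem_ker.mp (hsub hzc)
    rw [hLapp] at hLz
    exact sub_eq_zero.mp hLz
  have hz : ∀ cc : A, ρY.act (T (ρX.act x a) - ρY.act (T x) a) cc = 0 := by
    intro cc
    rw [map_sub, ContinuousLinearMap.sub_apply, hId x cc, ρY.act_mul]
    exact sub_self _
  exact sub_eq_zero.mp (hY _ hz)
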